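/- For every δ₁ ∈ (0,1/2) there exists L = L(δ₁) > 0 such that: for all y > 0 and y₀ > 0 with |y₀ − 1| ≤ min{δ₁/2, (√(1+δ₁)−1)(√(1−δ₁/2)+1)/2} and |y − 1| ≥ δ₁, one has |y − 1| ≤ L·|√y − √y₀|². -/

import Mathlib

set_option maxHeartbeats 800000 in
theorem sqrt_gap_controls_distance (δ₁ : ℝ) (hδ₁ : 0 < δ₁) (hδ₁' : δ₁ < 1/2) :
    ∃ L : ℝ, 0 < L ∧ ∀ y y₀ : ℝ, 0 < y → 0 < y₀ →
      |y₀ - 1| ≤ min (δ₁ / 2)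
        ((Real.sqrt (1 + δ₁) - 1) * (Real.sqrt (1 - δ₁ / 2) + 1) / 2) →
      δ₁ ≤ |y - 1| →
      |y - 1| ≤ L * |Real.sqrt y - Real.sqrt y₀| ^ 2 := by
  refine ⟨64 / δ₁ ^ 2, by positivity, ?_⟩
  intro y y₀ hy hy₀ hmin hgap
  set s₁ := Real.sqrt (1 + δ₁) with hs₁def
  set w := Real.sqrt (1 - δ₁ / 2) with hwdef
  have hs₁sq : s₁ ^ 2 = 1 + δ₁ := Real.sq_sqrt (by linarith)
  have hs₁0 : 0 ≤ s₁ := Real.sqrt_nonneg _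
  have hs₁1 : 1 < s₁ := by nlinarith
  have hs₁4 : s₁ < 4 / 3 := by nlinarith
  have hwsq : w ^ 2 = 1 - δ₁ / 2 := Real.sq_sqrt (by linarith)
  have hw0 : 0 ≤ w := Real.sqrt_nonneg _
  have hw1 : w ≤ 1 := by nlinarith
  have hfac : (0:ℝ) ≤ 4 - s₁ * (s₁ + 1) := by nlinarith
  have hk : δ₁ * s₁ ≤ 4 * (s₁ - 1) := by
    nlinarith [mul_nonneg (show (0:ℝ) ≤ s₁ - 1 by linarith) hfac]
  have hC : δ₁ ^ 2 * s₁ ^ 2 ≤ 16 * (s₁ - 1) ^ 2 := by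
    have h := pow_le_pow_left₀ (mul_nonneg hδ₁.le hs₁0) hk 2
    nlinarith [h]
  have hm1 := (le_min_iff.mp hmin).1
  have hm2 := (le_min_iff.mp hmin).2
  rw [abs_le] at hm1
  have hy₀lb : 1 - δ₁ / 2 ≤ y₀ := by linarith [hm1.1]
  set u := Real.sqrt y₀ with hudef
  set t := Real.sqrt y with htdef
  have husq : u ^ 2 = y₀ := Real.sq_sqrt hy₀.le
  have hu0 : 0 ≤ u := Real.sqrt_nonneg _
  have htsq : t ^ 2 = y := Real.sq_sqrt hy.le
  have ht0 : 0 ≤ t := Real.sqrt_nonneg _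
  have huw : w ≤ u := Real.sqrt_le_sqrt hy₀lb
  rw [sq_abs]
  rcases le_abs.mp hgap with h | h
  · -- y ≥ 1 + δ₁
    have hts₁ : s₁ ≤ t := Real.sqrt_le_sqrt (by linarith)
    clear_value t u w s₁
    -- u ≤ (1+s₁)/2
    have h2 : y₀ - 1 ≤ (s₁ - 1) * (w + 1) / 2 := le_trans (le_abs_self _) hm2
    have hub : u ≤ (1 + s₁) / 2 := by
      rcases le_or_gt u 1 with h' | h'
      · linarith
      · have hmm : (u - 1) * (u + 1) ≤ (s₁ - 1) / 2 * (u + 1) := by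
          have H := mul_le_mul_of_nonneg_left (show w + 1 ≤ u + 1 by linarith)
            (show (0:ℝ) ≤ s₁ - 1 by linarith)
          nlinarith [H, h2, husq]
        have := (mul_le_mul_iff_of_pos_right (show (0:ℝ) < u + 1 by linarith)).mp hmm
        linarith
    have habs : |y - 1| = y - 1 := abs_of_nonneg (by linarith)
    rw [habs, div_mul_eq_mul_div, le_div_iff₀ (by positivity)]
    have h1 : t * (s₁ - 1) / (2 * s₁) ≤ t - u := by
      have : 0 ≤ (s₁ + 1) * (t - s₁) / (2 * s₁) :=
        div_nonneg (mul_nonneg (by linarith) (by linarith)) (by linarith)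
      have heq : t - (1 + s₁) / 2 - t * (s₁ - 1) / (2 * s₁) = (s₁ + 1) * (t - s₁) / (2 * s₁) := by
        field_simp; ring
      linarith
    have h1' : 0 ≤ t * (s₁ - 1) / (2 * s₁) :=
      div_nonneg (mul_nonneg ht0 (by linarith)) (by linarith)
    have hA : (t * (s₁ - 1) / (2 * s₁)) ^ 2 ≤ (t - u) ^ 2 := pow_le_pow_left₀ h1' h1 2
    have hA' : t ^ 2 * (s₁ - 1) ^ 2 / (4 * s₁ ^ 2) ≤ (t - u) ^ 2 := by
      rw [show t ^ 2 * (s₁ - 1) ^ 2 / (4 * s₁ ^ 2) = (t * (s₁ - 1) / (2 * s₁)) ^ 2 by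
        field_simp; ring]
      exact hA
    have hD : t ^ 2 * (δ₁ ^ 2 * s₁ ^ 2) ≤ t ^ 2 * (16 * (s₁ - 1) ^ 2) :=
      mul_le_mul_of_nonneg_left hC (sq_nonneg t)
    have hE : t ^ 2 * δ₁ ^ 2 ≤ 64 * (t ^ 2 * (s₁ - 1) ^ 2 / (4 * s₁ ^ 2)) := by
      rw [show (64:ℝ) * (t ^ 2 * (s₁ - 1) ^ 2 / (4 * s₁ ^ 2)) =
        16 * t ^ 2 * (s₁ - 1) ^ 2 / s₁ ^ 2 by ring, le_div_iff₀ (by positivity)]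
      linarith [hD]
    have hy' : y * δ₁ ^ 2 = t ^ 2 * δ₁ ^ 2 := by rw [htsq]
    linarith [hA', hE, sq_nonneg δ₁, hy']
  · -- y ≤ 1 - δ₁
    have hyub : y ≤ 1 - δ₁ := by linarith
    set v := Real.sqrt (1 - δ₁) with hvdef
    have hvsq : v ^ 2 = 1 - δ₁ := Real.sq_sqrt (by linarith)
    have hv0 : 0 ≤ v := Real.sqrt_nonneg _
    have hv1 : v ≤ 1 := Real.sqrt_le_one.mpr (by linarith)
    have htv : t ≤ v := Real.sqrt_le_sqrt hyub
    have hwv0 : v ≤ w := Real.sqrt_le_sqrt (by linarith)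
    clear_value v t u w s₁
    have heq : (w - v) * (w + v) = δ₁ / 2 := by linear_combination hwsq - hvsq
    have hle : (w - v) * (w + v) ≤ (w - v) * 2 :=
      mul_le_mul_of_nonneg_left (by linarith) (by linarith)
    have hwv : δ₁ / 4 ≤ w - v := by linarith
    have hut : δ₁ / 4 ≤ u - t := by linarith
    have habs : |y - 1| = 1 - y := by rw [abs_of_nonpos (by linarith)]; ring
    rw [habs, div_mul_eq_mul_div, le_div_iff₀ (by positivity)]
    have hsq : (δ₁ / 4) ^ 2 ≤ (u - t) ^ 2 := pow_le_pow_left₀ (by positivity) hut 2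
    have h0 : (0:ℝ) ≤ y * δ₁ ^ 2 := mul_nonneg hy.le (sq_nonneg δ₁)
    linarith [hsq, h0, sq_nonneg δ₁]
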